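/- Let A be a finite-dimensional k-algebra, G a finite-dimensional right A-module, Λ = End_A(G), and I = add G. A morphism g : M → Y with Y ∈ I is a minimal left I-approximation of M if and only if Hom_A(g, G) : Hom_A(Y, G) → Hom_A(M, G) is a projective cover in the category of right Λ^op-modules. -/

import Mathlib

universe u

/-- Right minimality. -/
def RightMinimal {R X M : Type*} [Ring R] [AddCommGroup X] [Module R X]
    [AddCommGroup M] [Module R M] (f : X →ₗ[R] M) : Prop :=
  ∀ h : X →ₗ[R] X, f.comp h = f → Function.Bijective h

/-- Left minimality. -/
def LeftMinimal {R M Y : Type*} [Ring R] [AddCommGroup M] [Module R M]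
    [AddCommGroup Y] [Module R Y] (g : M →ₗ[R] Y) : Prop :=
  ∀ h : Y →ₗ[R] Y, h.comp g = g → Function.Bijective h

/-- `Z` belongs to `add G`. -/
def InAdd (R : Type u) [Ring R] (G Z : Type u) [AddCommGroup G] [Module R G]
    [AddCommGroup Z] [Module R Z] : Prop :=
  ∃ (m : ℕ) (p : (Fin m → G) →ₗ[R] Z) (s : Z →ₗ[R] (Fin m → G)), p.comp s = LinearMap.id

/-- `Hom_A(g, G)`: precomposition with `g`, as a morphism of left `Λ = End_A(G)`-modules. -/
def precompEnd {R : Type u} [Ring R] {G M Y : Type u} [AddCommGroup G] [Module R G]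
    [AddCommGroup M] [Module R M] [AddCommGroup Y] [Module R Y] (g : M →ₗ[R] Y) :
    (Y →ₗ[R] G) →ₗ[Module.End R G] (M →ₗ[R] G) where
  toFun f := f.comp g
  map_add' f₁ f₂ := by ext; simp
  map_smul' l f := by ext; simp

/-- A projective cover: a right minimal epimorphism from a projective module. -/
def IsProjectiveCover {S P N : Type*} [Ring S] [AddCommGroup P] [Module S P]
    [AddCommGroup N] [Module S N] (p : P →ₗ[S] N) : Prop :=
  Module.Projective S P ∧ Function.Surjective p ∧ RightMinimal p


section Helpers
variable {R : Type u} [Ring R] {G Y : Type u} [AddCommGroup G] [Module R G]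
  [AddCommGroup Y] [Module R Y] {m : ℕ}

/-- decomposition of any `f : Y →ₗ G` via the add-data. -/
lemma sum_smul_proj_eq (p : (Fin m → G) →ₗ[R] Y) (s : Y →ₗ[R] (Fin m → G))
    (hps : p.comp s = LinearMap.id) (f : Y →ₗ[R] G) :
    ∑ i : Fin m, (((f.comp p).comp (LinearMap.single R (fun _ : Fin m => G) i)) •
      ((LinearMap.proj i).comp s) : Y →ₗ[R] G) = f := by
  ext y
  have h1 : (∑ i : Fin m, (((f.comp p).comp (LinearMap.single R (fun _ : Fin m => G) i)) •
      ((LinearMap.proj i).comp s) : Y →ₗ[R] G)) y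
      = ∑ i : Fin m, (f.comp p) (Pi.single i (s y i)) := by
    simp [LinearMap.sum_apply]
  rw [h1, ← map_sum, Finset.univ_sum_single]
  exact congrArg f (LinearMap.congr_fun hps y)

/-- faithfulness: maps into `Y` are determined by post-composition with maps to `G`. -/
lemma faithful_into (p : (Fin m → G) →ₗ[R] Y) (s : Y →ₗ[R] (Fin m → G))
    (hps : p.comp s = LinearMap.id)
    {W : Type u} [AddCommGroup W] [Module R W] (a b : W →ₗ[R] Y)
    (h : ∀ f : Y →ₗ[R] G, f.comp a = f.comp b) : a = b := by
  ext w
  have hs : s (a w) = s (b w) := by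
    funext i
    exact LinearMap.congr_fun (h ((LinearMap.proj i).comp s)) w
  have h2 : p (s (a w)) = a w := LinearMap.congr_fun hps (a w)
  have h3 : p (s (b w)) = b w := LinearMap.congr_fun hps (b w)
  rw [← h2, ← h3, hs]

/-- fullness of `Hom(-,G)` on `add G`. -/
lemma full_end (p : (Fin m → G) →ₗ[R] Y) (s : Y →ₗ[R] (Fin m → G))
    (hps : p.comp s = LinearMap.id)
    (h : (Y →ₗ[R] G) →ₗ[Module.End R G] (Y →ₗ[R] G)) :
    ∃ h' : Y →ₗ[R] Y, ∀ f : Y →ₗ[R] G, h f = f.comp h' := by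
  refine ⟨p.comp (LinearMap.pi fun i => h ((LinearMap.proj i).comp s)), fun f => ?_⟩
  conv_lhs => rw [← sum_smul_proj_eq p s hps f]
  rw [map_sum]
  simp_rw [map_smul]
  ext y
  simp only [LinearMap.sum_apply, LinearMap.smul_apply, LinearMap.comp_apply,
    Module.End.smul_def, LinearMap.pi_apply]
  have hy : (LinearMap.pi fun i => h ((LinearMap.proj i).comp s)) y
      = ∑ i : Fin m, Pi.single i ((h ((LinearMap.proj i).comp s)) y) :=
    (Finset.univ_sum_single _).symm
  rw [hy, map_sum, map_sum]
  simp [LinearMap.coe_single]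
end Helpers

section Proj
variable {R : Type u} [Ring R] {G Y : Type u} [AddCommGroup G] [Module R G]
  [AddCommGroup Y] [Module R Y] {m : ℕ}

lemma projective_of_add_data (p : (Fin m → G) →ₗ[R] Y) (s : Y →ₗ[R] (Fin m → G))
    (hps : p.comp s = LinearMap.id) :
    Module.Projective (Module.End R G) (Y →ₗ[R] G) := by
  let φ : (Y →ₗ[R] G) →ₗ[Module.End R G] (Fin m → Module.End R G) :=
    { toFun := fun f => fun i => (f.comp p).comp (LinearMap.single R (fun _ : Fin m => G) i)
      map_add' := by intro f₁ f₂; funext i; ext x; simp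
      map_smul' := by intro l f; funext i; ext x; simp }
  let ψ : (Fin m → Module.End R G) →ₗ[Module.End R G] (Y →ₗ[R] G) :=
    { toFun := fun v => ∑ i : Fin m, v i • ((LinearMap.proj i).comp s : Y →ₗ[R] G)
      map_add' := by intro a b; simp [add_smul, Finset.sum_add_distrib]
      map_smul' := by intro l v; simp [mul_smul, Finset.smul_sum] }
  exact Module.Projective.of_split φ ψ (by
    refine LinearMap.ext fun f => ?_
    show ∑ i : Fin m, ((f.comp p).comp (LinearMap.single R (fun _ : Fin m => G) i)) •
      ((LinearMap.proj i).comp s : Y →ₗ[R] G) = f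
    exact sum_smul_proj_eq p s hps f)
end Proj

/-- For `Y ∈ add G`, a morphism `g : M → Y` is a minimal left `add G`-approximation of `M`
iff `Hom_A(g, G) : Hom_A(Y, G) → Hom_A(M, G)` is a projective cover of `Hom_A(M, G)`
over `Λ = End_A(G)` (i.e. in the category of right `Λ^op`-modules). -/

theorem minimal_leftApprox_iff_projectiveCover
    {k : Type u} {A : Type u} [Field k] [Ring A] [Algebra k A] [FiniteDimensional k A]
    (G : Type u) [AddCommGroup G] [Module Aᵐᵒᵖ G] [Module k G] [IsScalarTower k Aᵐᵒᵖ G]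
    [FiniteDimensional k G]
    {M Y : Type u}
    [AddCommGroup M] [Module Aᵐᵒᵖ M] [Module k M] [IsScalarTower k Aᵐᵒᵖ M]
    [FiniteDimensional k M]
    [AddCommGroup Y] [Module Aᵐᵒᵖ Y] [Module k Y] [IsScalarTower k Aᵐᵒᵖ Y]
    [FiniteDimensional k Y]
    (hY : InAdd Aᵐᵒᵖ G Y) (g : M →ₗ[Aᵐᵒᵖ] Y) :
    ((∀ (Z : Type u) [AddCommGroup Z] [Module Aᵐᵒᵖ Z], InAdd Aᵐᵒᵖ G Z →
        ∀ u : M →ₗ[Aᵐᵒᵖ] Z, ∃ v : Y →ₗ[Aᵐᵒᵖ] Z, v.comp g = u) ∧ LeftMinimal g)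
      ↔ IsProjectiveCover (precompEnd (G := G) g) := by
  obtain ⟨m, p, s, hps⟩ := hY
  constructor
  · rintro ⟨happ, hmin⟩
    refine ⟨projective_of_add_data p s hps, ?_, ?_⟩
    · -- surjectivity from the approximation property applied to `Z = G`
      intro u
      have hG : InAdd Aᵐᵒᵖ G G :=
        ⟨1, LinearMap.proj 0, LinearMap.pi (fun _ => LinearMap.id), by ext x; rfl⟩
      obtain ⟨v, hv⟩ := happ G hG u
      exact ⟨v, hv⟩
    · -- right minimality from left minimality
      intro h hcomp
      obtain ⟨h', hh'⟩ := full_end p s hps h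
      have hg : h'.comp g = g := by
        apply faithful_into p s hps
        intro f
        have hcf : (h f).comp g = f.comp g := LinearMap.congr_fun hcomp f
        calc f.comp (h'.comp g) = (f.comp h').comp g := by rw [LinearMap.comp_assoc]
          _ = (h f).comp g := by rw [← hh' f]
          _ = f.comp g := hcf
      have hb := hmin h' hg
      set e := LinearEquiv.ofBijective h' hb with he
      constructor
      · intro f₁ f₂ hf
        have hcomp' : f₁.comp h' = f₂.comp h' := by rw [← hh' f₁, ← hh' f₂, hf]
        ext y
        have h1 := LinearMap.congr_fun hcomp' (e.symm y)
        have hy : h' (e.symm y) = y := e.apply_symm_apply y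
        simpa [hy] using h1
      · intro u
        refine ⟨u.comp (e.symm : Y →ₗ[Aᵐᵒᵖ] Y), ?_⟩
        rw [hh']
        ext y
        have hy : e.symm (h' y) = y := e.symm_apply_apply y
        simp [hy]
  · rintro ⟨hproj, hsurj, hmin⟩
    constructor
    · -- approximation property from surjectivity
      intro Z _ _ hZ u
      obtain ⟨n, pZ, sZ, hZps⟩ := hZ
      choose v hv using fun i : Fin n => hsurj (((LinearMap.proj i).comp sZ).comp u)
      refine ⟨pZ.comp (LinearMap.pi v), ?_⟩
      ext x
      have hx : (fun i => v i (g x)) = sZ (u x) :=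
        funext fun i => LinearMap.congr_fun (hv i) x
      show pZ ((LinearMap.pi v) (g x)) = u x
      have : (LinearMap.pi v) (g x) = sZ (u x) := hx
      rw [this]
      exact LinearMap.congr_fun hZps (u x)
    · -- left minimality from right minimality
      intro h hg
      have hH : (precompEnd (G := G) g).comp (precompEnd (G := G) h)
          = precompEnd (G := G) g := by
        refine LinearMap.ext fun f => ?_
        show (f.comp h).comp g = f.comp g
        rw [LinearMap.comp_assoc, hg]
      have hbij := hmin (precompEnd (G := G) h) hH
      set E := LinearEquiv.ofBijective (precompEnd (G := G) h) hbij with hE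
      obtain ⟨h'', hh''⟩ := full_end p s hps E.symm.toLinearMap
      have hsymm : ∀ f : Y →ₗ[Aᵐᵒᵖ] G, E.symm f = f.comp h'' := fun f => hh'' f
      have h1 : h.comp h'' = LinearMap.id := by
        apply faithful_into p s hps
        intro f
        have hsa : E.symm (E f) = f := E.symm_apply_apply f
        calc f.comp (h.comp h'') = (f.comp h).comp h'' := by rw [LinearMap.comp_assoc]
          _ = E.symm (f.comp h) := (hsymm _).symm
          _ = E.symm (E f) := rfl
          _ = f := hsa
          _ = f.comp LinearMap.id := by rw [LinearMap.comp_id]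
      have h2 : h''.comp h = LinearMap.id := by
        apply faithful_into p s hps
        intro f
        have has : E (E.symm f) = f := E.apply_symm_apply f
        calc f.comp (h''.comp h) = (f.comp h'').comp h := by rw [LinearMap.comp_assoc]
          _ = (E.symm f).comp h := by rw [← hsymm f]
          _ = E (E.symm f) := rfl
          _ = f := has
          _ = f.comp LinearMap.id := by rw [LinearMap.comp_id]
      exact Function.bijective_iff_has_inverse.mpr
        ⟨h'', fun y => LinearMap.congr_fun h2 y, fun y => LinearMap.congr_fun h1 y⟩
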